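/- For every integer r ≥ 1, there exist polynomials p and q with real coefficients, each of degree 2r−2, such that q is obtained from p by the conjugation √5 ↦ −√5 (i.e., q = p̄ with α replaced by β in the coefficients), and for all integers n ≥ r, F_{n−r+2} · S(n, n−r+1) = p(n) · α^{n+2−r} + q(n) · β^{n+2−r}, where α = (1+√5)/2 and β = (1−√5)/2. -/
import Mathlib


/-- Stirling numbers of the second kind. -/
def stirling2 : ℕ → ℕ → ℕ
  | 0, 0 => 1
  | 0, _ + 1 => 0
  | _ + 1, 0 => 0
  | n + 1, k + 1 => stirling2 n k + (k + 1) * stirling2 n (k + 1)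

open Polynomial Finset

lemma stirling2_eq_zero : ∀ n k : ℕ, n < k → stirling2 n k = 0
  | 0, _ + 1, _ => rfl
  | n + 1, k + 1, h => by
    rw [stirling2, stirling2_eq_zero n k (by omega), stirling2_eq_zero n (k+1) (by omega)]
    ring

lemma stirling2_self : ∀ n : ℕ, stirling2 n n = 1
  | 0 => rfl
  | n + 1 => by
    rw [stirling2, stirling2_self n, stirling2_eq_zero n (n+1) (Nat.lt_succ_self n)]
    ring

/-- Polynomial whose values give power sums (Faulhaber). -/
noncomputable def sumPow (p : ℕ) : Polynomial ℚ :=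
  ∑ i ∈ Finset.range (p+1), C (_root_.bernoulli i * ((p+1).choose i) / (p+1)) * X ^ (p+1-i)

lemma sumPow_eval (p n : ℕ) : (sumPow p).eval (n : ℚ) = ∑ k ∈ Finset.range n, (k : ℚ) ^ p := by
  rw [sum_range_pow, sumPow, eval_finset_sum]
  refine Finset.sum_congr rfl fun i _ => ?_
  simp [div_mul_eq_mul_div]

lemma sumPow_natDegree_le (p : ℕ) : (sumPow p).natDegree ≤ p + 1 := by
  refine natDegree_sum_le_of_forall_le _ _ fun i _ => ?_
  refine le_trans (natDegree_C_mul_le _ _) ?_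
  simp

lemma sumPow_coeff_top (p : ℕ) : (sumPow p).coeff (p+1) = 1 / (p+1) := by
  rw [sumPow, finset_sum_coeff, Finset.sum_eq_single 0]
  · simp
  · intro i hi hne
    rw [coeff_C_mul, coeff_X_pow, if_neg (by omega), mul_zero]
  · intro h; exact absurd (Finset.mem_range.mpr (Nat.succ_pos p)) h

/-- Polynomial antidifference with degree/leading-coefficient control. -/
lemma antidiff (f : Polynomial ℚ) :
    ∃ g : Polynomial ℚ, (∀ n : ℕ, g.eval (n : ℚ) = ∑ m ∈ Finset.range n, f.eval (m : ℚ)) ∧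
      g.natDegree ≤ f.natDegree + 1 ∧
      g.coeff (f.natDegree + 1) = f.leadingCoeff / (f.natDegree + 1) := by
  refine ⟨∑ i ∈ Finset.range (f.natDegree + 1), C (f.coeff i) * sumPow i, ?_, ?_, ?_⟩
  · intro n
    rw [eval_finset_sum]
    simp only [eval_mul, eval_C, sumPow_eval]
    simp_rw [Finset.mul_sum]
    rw [Finset.sum_comm]
    exact Finset.sum_congr rfl fun k _ => (eval_eq_sum_range (k : ℚ)).symm
  · refine natDegree_sum_le_of_forall_le _ _ fun i hi => ?_
    refine le_trans (natDegree_C_mul_le _ _) (le_trans (sumPow_natDegree_le i) ?_)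
    have := Finset.mem_range.mp hi; omega
  · rw [finset_sum_coeff, Finset.sum_eq_single f.natDegree]
    · rw [coeff_C_mul, sumPow_coeff_top, Polynomial.leadingCoeff]
      ring
    · intro i hi hne
      have hi' : i < f.natDegree := lt_of_le_of_ne (Nat.lt_succ_iff.mp (Finset.mem_range.mp hi)) hne
      rw [coeff_C_mul, coeff_eq_zero_of_natDegree_lt (lt_of_le_of_lt (sumPow_natDegree_le i) (by omega)),
        mul_zero]
    · intro h; exact absurd (Finset.mem_range.mpr (Nat.lt_succ_self _)) h

/-- The `k`-th diagonal Stirling numbers `S(n, n-k)` are given by a polynomial of degree `2k`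
with positive leading coefficient. -/
lemma stirlingPoly (k : ℕ) : ∃ P : Polynomial ℚ, P.degree = (2 * k : ℕ) ∧ 0 < P.leadingCoeff ∧
    ∀ n : ℕ, k ≤ n → P.eval (n : ℚ) = stirling2 n (n - k) := by
  induction k with
  | zero =>
    exact ⟨1, by simp, by simp, fun n _ => by simp [stirling2_self]⟩
  | succ k ih =>
    obtain ⟨P, hdeg, hlc, hP⟩ := ih
    have hP0 : P ≠ 0 := fun h => by simp [h] at hlc
    have hndeg : P.natDegree = 2 * k := natDegree_eq_of_degree_eq_some hdeg
    set f : Polynomial ℚ := (X - C (k : ℚ)) * P with hf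
    have hf0 : f ≠ 0 := mul_ne_zero (X_sub_C_ne_zero _) hP0
    have hflc : f.leadingCoeff = P.leadingCoeff := by
      rw [hf, leadingCoeff_mul, leadingCoeff_X_sub_C, one_mul]
    have hfnd : f.natDegree = 2 * k + 1 := by
      rw [hf, natDegree_mul (X_sub_C_ne_zero _) hP0, natDegree_X_sub_C, hndeg]; omega
    obtain ⟨g, hg, hgd, hgc⟩ := antidiff f
    set Q : Polynomial ℚ := g - C (g.eval ((k + 1 : ℕ) : ℚ)) with hQ
    have hQc : Q.coeff (2 * (k + 1)) = f.leadingCoeff / (2 * k + 2) := by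
      rw [hQ, coeff_sub, coeff_C, if_neg (by omega)]
      have : 2 * (k + 1) = f.natDegree + 1 := by omega
      rw [this, hgc, hfnd, sub_zero]
      push_cast
      ring_nf
    have hQcpos : 0 < Q.coeff (2 * (k + 1)) := by
      rw [hQc, hflc]; positivity
    have hQnd : Q.natDegree ≤ 2 * (k + 1) := by
      refine le_trans (natDegree_sub_le _ _) (max_le ?_ ?_)
      · omega
      · simp
    have hQdeg : Q.degree = (2 * (k + 1) : ℕ) := by
      refine le_antisymm (degree_le_of_natDegree_le hQnd) (le_degree_of_ne_zero hQcpos.ne')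
    refine ⟨Q, hQdeg, ?_, ?_⟩
    · have : Q.natDegree = 2 * (k + 1) := natDegree_eq_of_degree_eq_some hQdeg
      rw [Polynomial.leadingCoeff, this]; exact hQcpos
    · intro n hn
      induction n, hn using Nat.le_induction with
      | base =>
        have h1 : Q.eval ((k + 1 : ℕ) : ℚ) = 0 := by rw [hQ]; simp
        have h2 : (k + 1) - (k + 1) = 0 := by omega
        rw [h1, h2]
        norm_num [stirling2]
      | succ n hn ihn =>
        have hgs : g.eval ((n + 1 : ℕ) : ℚ) = g.eval (n : ℚ) + f.eval (n : ℚ) := by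
          rw [hg, hg, Finset.sum_range_succ]
        have hQs : Q.eval ((n + 1 : ℕ) : ℚ) = Q.eval (n : ℚ) + f.eval (n : ℚ) := by
          rw [hQ]; simp only [eval_sub, eval_C, hgs]; ring
        have hfe : f.eval (n : ℚ) = ((n - k : ℕ) : ℚ) * stirling2 n (n - k) := by
          rw [hf, eval_mul, eval_sub, eval_X, eval_C, hP n (by omega),
            Nat.cast_sub (by omega : k ≤ n)]
        have hsub : n - k = (n - (k + 1)) + 1 := by omega
        have hst : stirling2 (n + 1) ((n + 1) - (k + 1)) =
            stirling2 n (n - (k + 1)) + (n - k) * stirling2 n (n - k) := by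
          have h3 : (n + 1) - (k + 1) = (n - (k + 1)) + 1 := by omega
          rw [h3, stirling2, ← hsub]
        rw [hQs, ihn, hfe, hst]
        push_cast [hsub]
        ring

open Polynomial Real in
/-- The `r`-th right-down diagonal `d_n^{(r)} = F_{n-r+2}·S(n, n-r+1)` of the Fibonacci-Fubini
triangle can be written as `p(n)·α^{n+2-r} + q(n)·β^{n+2-r}` where `p, q` are conjugate
polynomials (over `ℚ(√5)`, with `√5 ↦ -√5`) of degree `2r-2`. -/
theorem fibFubiniD_binet_form (r : ℕ) (hr : 1 ≤ r) :
    ∃ p q : Polynomial ℝ, ∃ A B : Polynomial ℚ,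
      p = A.map (algebraMap ℚ ℝ) + Polynomial.C (Real.sqrt 5) * B.map (algebraMap ℚ ℝ) ∧
      q = A.map (algebraMap ℚ ℝ) - Polynomial.C (Real.sqrt 5) * B.map (algebraMap ℚ ℝ) ∧
      p.degree = (2 * r - 2 : ℕ) ∧ q.degree = (2 * r - 2 : ℕ) ∧
      ∀ n : ℕ, r ≤ n →
        (Nat.fib (n - r + 2) * stirling2 n (n - r + 1) : ℝ) =
          p.eval (n : ℝ) * ((1 + Real.sqrt 5) / 2) ^ (n + 2 - r) +
            q.eval (n : ℝ) * ((1 - Real.sqrt 5) / 2) ^ (n + 2 - r) := by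
  obtain ⟨P, hdeg, hlc, hP⟩ := stirlingPoly (r - 1)
  have hP0 : P ≠ 0 := fun h => by simp [h] at hlc
  have s5pos : (0 : ℝ) < Real.sqrt 5 := Real.sqrt_pos.mpr (by norm_num)
  set B : Polynomial ℚ := C (1/5) * P with hB
  refine ⟨(0 : Polynomial ℚ).map (algebraMap ℚ ℝ) + C (Real.sqrt 5) * B.map (algebraMap ℚ ℝ),
    (0 : Polynomial ℚ).map (algebraMap ℚ ℝ) - C (Real.sqrt 5) * B.map (algebraMap ℚ ℝ),
    0, B, rfl, rfl, ?_, ?_, ?_⟩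
  · rw [Polynomial.map_zero, zero_add, degree_C_mul s5pos.ne',
      degree_map_eq_of_injective (algebraMap ℚ ℝ).injective, hB, degree_C_mul (by norm_num), hdeg]
    congr 1
    omega
  · rw [Polynomial.map_zero, zero_sub, degree_neg, degree_C_mul s5pos.ne',
      degree_map_eq_of_injective (algebraMap ℚ ℝ).injective, hB, degree_C_mul (by norm_num), hdeg]
    congr 1
    omega
  · intro n hn
    have hm : n + 2 - r = n - r + 2 := by omega
    have hk : n - r + 1 = n - (r - 1) := by omega
    have hval : ((stirling2 n (n - r + 1) : ℚ) : ℝ) = (algebraMap ℚ ℝ) (P.eval (n : ℚ)) := by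
      rw [hk, ← hP n (by omega)]; rfl
    have hBe : (B.map (algebraMap ℚ ℝ)).eval ((n : ℕ) : ℝ) =
        (stirling2 n (n - r + 1) : ℝ) / 5 := by
      rw [eval_natCast_map, hB, eval_mul, eval_C, map_mul]
      rw [← hval]
      push_cast
      norm_num
      ring
    rw [Polynomial.map_zero, zero_add, zero_sub]
    rw [eval_mul, eval_C, eval_neg, eval_mul, eval_C, hBe]
    have hfib : (Nat.fib (n - r + 2) : ℝ) =
        (((1 + Real.sqrt 5)/2) ^ (n - r + 2) - ((1 - Real.sqrt 5)/2) ^ (n - r + 2)) / Real.sqrt 5 :=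
      Real.coe_fib_eq _
    rw [hm, hfib]
    have h5 : Real.sqrt 5 * Real.sqrt 5 = 5 := Real.mul_self_sqrt (by norm_num)
    rw [div_mul_eq_mul_div, div_eq_iff s5pos.ne']
    linear_combination (-(((stirling2 n (n - r + 1) : ℝ)) *
      (((1 + Real.sqrt 5)/2)^(n-r+2) - ((1 - Real.sqrt 5)/2)^(n-r+2)))/5) * h5
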